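/- Fix ε ∈ (0, 1/10). Let X = [ε, 1], let D2 be the distribution on X × {0,1} under which x is uniform on [ε, 1] and, conditioned on x, the label y is Bernoulli with parameter x − ε, and let p2 be the identity predictor p2(x) = x. Then ECE(p2, D2) = ε and CDL(p2, D2) ≤ ε²/(1 − ε). In particular, CDL can be quadratically smaller than ECE. -/

import Mathlib

open scoped Classical ENNReal
open MeasureTheory Set

noncomputable section

/-- The Bernoulli distribution with parameter `r` on `Bool`, as a measure. -/
def bern (r : ℝ) : Measure Bool :=
  ENNReal.ofReal r • Measure.dirac true + ENNReal.ofReal (1 - r) • Measure.dirac false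

/-- The joint distribution `D2` of `(x, y)` (equivalently of `(p2(x), y)` since `p2 = id`):
`x` is uniform on `[ε, 1]` and, conditioned on `x`, the label `y` is Bernoulli(`x - ε`). -/
def D2 (ε : ℝ) : Measure (ℝ × Bool) :=
  ((ENNReal.ofReal (1 - ε))⁻¹ • volume.restrict (Set.Icc ε 1)).bind
    fun v => (bern (v - ε)).map fun y => (v, y)

lemma bern_lintegral (r : ℝ) (f : Bool → ℝ≥0∞) :
    ∫⁻ y, f y ∂bern r = ENNReal.ofReal r * f true + ENNReal.ofReal (1 - r) * f false := by
  simp [bern, lintegral_add_measure, lintegral_smul_measure, lintegral_dirac]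

lemma kernel_meas (ε : ℝ) :
    Measurable fun v : ℝ => (bern (v - ε)).map fun y => (v, y) := by
  apply Measure.measurable_of_measurable_coe
  intro s hs
  have h1 : ∀ v : ℝ, ((bern (v - ε)).map fun y => (v, y)) s
      = ENNReal.ofReal (v - ε) * s.indicator (fun _ => (1:ℝ≥0∞)) (v, true)
        + ENNReal.ofReal (1 - (v - ε)) * s.indicator (fun _ => (1:ℝ≥0∞)) (v, false) := by
    intro v
    rw [Measure.map_apply (measurable_prodMk_left) hs]
    simp [bern, Measure.dirac_apply' _ (measurable_prodMk_left hs), Set.indicator]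
  simp only [h1]
  apply Measurable.add
  · exact (ENNReal.measurable_ofReal.comp (measurable_id.sub measurable_const)).mul
      ((measurable_const.indicator hs).comp (measurable_prodMk_right))
  · exact (ENNReal.measurable_ofReal.comp (measurable_const.sub
      (measurable_id.sub measurable_const))).mul
      ((measurable_const.indicator hs).comp (measurable_prodMk_right))

lemma D2_lintegral (ε : ℝ) {f : ℝ × Bool → ℝ≥0∞} (hf : Measurable f) :
    ∫⁻ z, f z ∂(D2 ε) = (ENNReal.ofReal (1 - ε))⁻¹ *
      ∫⁻ v in Set.Icc ε 1,
        (ENNReal.ofReal (v - ε) * f (v, true) + ENNReal.ofReal (1 - (v - ε)) * f (v, false)) := by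
  rw [D2, Measure.lintegral_bind (kernel_meas ε).aemeasurable hf.aemeasurable]
  rw [lintegral_smul_measure]
  congr 1
  refine lintegral_congr fun v => ?_
  rw [lintegral_map hf measurable_prodMk_left, bern_lintegral]

lemma weight_sum {ε v : ℝ} (hv : v ∈ Set.Icc ε 1) (hε : 0 < ε) (hε1 : ε < 1) :
    ENNReal.ofReal (v - ε) + ENNReal.ofReal (1 - (v - ε)) = 1 := by
  rw [← ENNReal.ofReal_add (by linarith [hv.1]) (by linarith [hv.2]), ← ENNReal.ofReal_one]
  norm_num

lemma D2_prob {ε : ℝ} (hε : 0 < ε) (hε1 : ε < 1) : IsProbabilityMeasure (D2 ε) := by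
  constructor
  have h := D2_lintegral ε (f := fun _ => 1) measurable_const
  simp only [lintegral_const, Measure.restrict_apply, Set.univ_inter] at h
  rw [one_mul] at h
  rw [h]
  rw [setLIntegral_congr_fun measurableSet_Icc
    (fun v hv => by rw [mul_one, mul_one, weight_sum hv hε hε1])]
  rw [setLIntegral_one, Real.volume_Icc]
  rw [ENNReal.inv_mul_cancel (by simp; linarith) (by simp)]

lemma D2_ae_Icc {ε : ℝ} (hε : 0 < ε) (hε1 : ε < 1) :
    ∀ᵐ z ∂(D2 ε), z.1 ∈ Set.Icc ε 1 := by
  rw [MeasureTheory.ae_iff]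
  have hms : MeasurableSet {z : ℝ × Bool | ¬ z.1 ∈ Set.Icc ε 1} :=
    (measurableSet_Icc.compl).preimage measurable_fst
  have h := D2_lintegral ε (f := fun z => {z : ℝ × Bool | ¬ z.1 ∈ Set.Icc ε 1}.indicator 1 z)
    (measurable_one.indicator hms)
  rw [lintegral_indicator hms _] at h
  simp only [Pi.one_apply] at h
  rw [setLIntegral_one] at h
  rw [h, setLIntegral_congr_fun (g := fun _ => (0:ℝ≥0∞)) measurableSet_Icc
    (fun v (hv : v ∈ Set.Icc ε 1) => by
      simp [Set.indicator, hv.1, not_lt.2 hv.2])]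
  simp

lemma D2_integral {ε : ℝ} (hε : 0 < ε) (hε1 : ε < 1) {F : ℝ × Bool → ℝ}
    (hF : Measurable F) (h0 : ∀ z, 0 ≤ F z) (h1 : ∀ z, F z ≤ 1) :
    ∫ z, F z ∂(D2 ε) = (1 - ε)⁻¹ *
      ∫ v in Set.Icc ε 1, ((v - ε) * F (v, true) + (1 - (v - ε)) * F (v, false)) ∂volume := by
  have hFt : Measurable fun v : ℝ => F (v, true) :=
    hF.comp (measurable_id.prodMk measurable_const)
  have hFf : Measurable fun v : ℝ => F (v, false) :=
    hF.comp (measurable_id.prodMk measurable_const)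
  set L := ∫⁻ v in Set.Icc ε 1,
      (ENNReal.ofReal (v - ε) * ENNReal.ofReal (F (v, true))
        + ENNReal.ofReal (1 - (v - ε)) * ENNReal.ofReal (F (v, false))) with hL
  have hLfin : L ≤ ENNReal.ofReal (1 - ε) := by
    calc L ≤ ∫⁻ _ in Set.Icc ε 1, (1 : ℝ≥0∞) ∂volume := by
            refine setLIntegral_mono measurable_const fun v hv => ?_
            calc ENNReal.ofReal (v - ε) * ENNReal.ofReal (F (v, true))
                  + ENNReal.ofReal (1 - (v - ε)) * ENNReal.ofReal (F (v, false))
                ≤ ENNReal.ofReal (v - ε) * 1 + ENNReal.ofReal (1 - (v - ε)) * 1 := by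
                  gcongr <;> exact ENNReal.ofReal_le_one.2 (h1 _)
              _ = 1 := by rw [mul_one, mul_one, weight_sum hv hε hε1]
      _ = ENNReal.ofReal (1 - ε) := by rw [setLIntegral_one, Real.volume_Icc]
  have hLne : L ≠ ⊤ := (hLfin.trans_lt ENNReal.ofReal_lt_top).ne
  have hlhs : ∫ z, F z ∂(D2 ε) = ((ENNReal.ofReal (1 - ε))⁻¹ * L).toReal := by
    rw [MeasureTheory.integral_eq_lintegral_of_nonneg_ae (Filter.Eventually.of_forall h0)
      hF.aestronglyMeasurable]
    congr 1
    rw [D2_lintegral ε (f := fun z => ENNReal.ofReal (F z)) (ENNReal.measurable_ofReal.comp hF)]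
  have hrhs : ∫ v in Set.Icc ε 1,
      ((v - ε) * F (v, true) + (1 - (v - ε)) * F (v, false)) ∂volume = L.toReal := by
    rw [MeasureTheory.integral_eq_lintegral_of_nonneg_ae]
    · congr 1
      refine setLIntegral_congr_fun measurableSet_Icc
        (fun v (hv : v ∈ Set.Icc ε 1) => ?_)
      rw [ENNReal.ofReal_add (mul_nonneg (by linarith [hv.1]) (h0 _))
        (mul_nonneg (by linarith [hv.2]) (h0 _)),
        ENNReal.ofReal_mul (by linarith [hv.1]), ENNReal.ofReal_mul (by linarith [hv.2])]
    · refine (MeasureTheory.ae_restrict_mem measurableSet_Icc).mono fun v hv => ?_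
      exact add_nonneg (mul_nonneg (by linarith [hv.1]) (h0 _))
        (mul_nonneg (by linarith [hv.2]) (h0 _))
    · exact (((measurable_id.sub measurable_const).mul hFt).add
        ((measurable_const.sub (measurable_id.sub measurable_const)).mul hFf)).aestronglyMeasurable
  rw [hlhs, hrhs, ENNReal.toReal_mul, ENNReal.toReal_inv, ENNReal.toReal_ofReal (by linarith)]

/-- The σ-algebra on `ℝ × Bool` generated by the prediction (first coordinate). -/
def predσ : MeasurableSpace (ℝ × Bool) := MeasurableSpace.comap Prod.fst inferInstance

/-- Numerical value of the label, as a function on the joint space. -/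
def Yf : ℝ × Bool → ℝ := fun z => if z.2 then 1 else 0

/-- `ECE(p, D) = E|E[y | p(x)] - p(x)|`, computed on the joint distribution of
`(p(x), y)` via conditional expectation given the prediction. -/
def ECEm (μ : Measure (ℝ × Bool)) : ℝ :=
  ∫ z, |(μ[Yf|predσ]) z - z.1| ∂μ

lemma predσ_le : predσ ≤ (inferInstance : MeasurableSpace (ℝ × Bool)) := by
  rintro s ⟨t, ht, rfl⟩
  exact measurable_fst ht

lemma Yf_meas : Measurable Yf :=
  (measurable_from_top (f := fun b : Bool => if b then (1:ℝ) else 0)).comp measurable_snd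

/-- clamped version of `v ↦ v - ε` -/
def cl (ε : ℝ) : ℝ → ℝ := fun v => min (max v ε) 1 - ε

lemma cl_meas (ε : ℝ) : Measurable (cl ε) :=
  (((measurable_id.max measurable_const).min measurable_const).sub measurable_const)

lemma cl_eq {ε v : ℝ} (hv : v ∈ Set.Icc ε 1) : cl ε v = v - ε := by
  simp [cl, max_eq_left hv.1, min_eq_left hv.2]

lemma condexp_eq {ε : ℝ} (hε : 0 < ε) (hε1 : ε < 1) :
    (fun z : ℝ × Bool => cl ε z.1) =ᵐ[D2 ε] (D2 ε)[Yf|predσ] := by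
  haveI := D2_prob hε hε1
  refine ae_eq_condExp_of_forall_setIntegral_eq predσ_le ?_ ?_ ?_ ?_
  · -- Integrable Yf
    refine Integrable.mono' (integrable_const 1) Yf_meas.aestronglyMeasurable
      (Filter.Eventually.of_forall fun z => ?_)
    simp only [Yf]
    split <;> simp
  · intro s _ _
    refine (Integrable.mono' (integrable_const 1)
      ((cl_meas ε).comp measurable_fst).aestronglyMeasurable
      (Filter.Eventually.of_forall fun z => ?_)).integrableOn
    have h1 : ε ≤ min (max z.1 ε) 1 := le_min (le_max_right _ _) hε1.le
    have h2 : min (max z.1 ε) 1 ≤ 1 := min_le_right _ _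
    simp only [Function.comp, cl, Real.norm_eq_abs, abs_le]
    constructor <;> linarith
  · rintro s ⟨B, hB, rfl⟩ _
    have hsm : MeasurableSet (Prod.fst ⁻¹' B : Set (ℝ × Bool)) := measurable_fst hB
    rw [← MeasureTheory.integral_indicator hsm, ← MeasureTheory.integral_indicator hsm]
    have hcl0 : ∀ v : ℝ, 0 ≤ cl ε v := fun v => by
      have : ε ≤ min (max v ε) 1 := le_min (le_max_right _ _) hε1.le
      simp only [cl]; linarith
    have hcl1 : ∀ v : ℝ, cl ε v ≤ 1 := fun v => by
      have : min (max v ε) 1 ≤ 1 := min_le_right _ _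
      simp only [cl]; linarith
    rw [D2_integral hε hε1 (F := (Prod.fst ⁻¹' B).indicator (fun z : ℝ × Bool => cl ε z.1))
        (((cl_meas ε).comp measurable_fst).indicator hsm)
        (fun z => Set.indicator_nonneg (fun z _ => hcl0 z.1) z)
        (fun z => Set.indicator_le' (fun z _ => hcl1 z.1) (fun _ _ => zero_le_one) z),
      D2_integral hε hε1 (Yf_meas.indicator hsm)
        (fun z => Set.indicator_nonneg (fun z _ => by simp [Yf]; split <;> simp) z)
        (fun z => Set.indicator_le' (fun z _ => by simp [Yf]; split <;> simp) (fun _ _ => zero_le_one) z)]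
    congr 1
    refine MeasureTheory.setIntegral_congr_fun measurableSet_Icc fun v hv => ?_
    by_cases hvB : v ∈ B <;>
      simp [Set.indicator, hvB, Yf, cl_eq hv] <;> ring
  · exact StronglyMeasurable.aestronglyMeasurable
      (Measurable.stronglyMeasurable
        (((cl_meas ε).comp (fun t ht => ⟨t, ht, rfl⟩ : @Measurable _ _ predσ _ Prod.fst))))

lemma ECE_eq {ε : ℝ} (hε : 0 < ε) (hε1 : ε < 1) : ECEm (D2 ε) = ε := by
  haveI := D2_prob hε hε1
  rw [ECEm]
  have h1 : (fun z : ℝ × Bool => |((D2 ε)[Yf|predσ]) z - z.1|) =ᵐ[D2 ε] fun _ => ε := by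
    filter_upwards [condexp_eq hε hε1, D2_ae_Icc hε hε1] with z hz hz2
    rw [← hz, cl_eq hz2]
    simp [abs_of_nonneg hε.le]
  rw [MeasureTheory.integral_congr_ae h1]
  simp

/-- `σT` is a best-response function for the decision task `(A, u)`. -/
def IsBestResponse {A : Type} (u : A → Bool → ℝ) (σT : ℝ → A) : Prop :=
  ∀ v ∈ Set.Icc (0 : ℝ) 1, ∀ a : A,
    v * u a true + (1 - v) * u a false ≤ v * u (σT v) true + (1 - v) * u (σT v) false

/-- The expected payoff `E[u(σ(p(x)), y)]` under the joint distribution `μ` of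
`(p(x), y)`. -/
def payoffm {A : Type} (μ : Measure (ℝ × Bool)) (u : A → Bool → ℝ) (σ : ℝ → A) : ℝ :=
  ∫ z, u (σ z.1) z.2 ∂μ

/-- The map `v ↦ u(σ(v), ·)` is measurable (so that its expected payoff makes sense). -/
def MeasurableStrategy {A : Type} (u : A → Bool → ℝ) (σ : ℝ → A) : Prop :=
  ∀ y : Bool, Measurable fun v => u (σ v) y

/-- `CFDL_T(p, D) = max_σ E[u(σ(p(x)), y)] - E[u(σT(p(x)), y)]`. -/
def CFDLm {A : Type} (μ : Measure (ℝ × Bool)) (u : A → Bool → ℝ) (σT : ℝ → A) : ℝ :=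
  sSup {e : ℝ | ∃ σ : ℝ → A, MeasurableStrategy u σ ∧ e = payoffm μ u σ} -
    payoffm μ u σT

/-- The Calibration Decision Loss: the supremum of `CFDL_T` over all decision tasks
`T = (A, u)` with payoffs bounded in `[0,1]` and a best-response function `σT`. -/
def CDLm (μ : Measure (ℝ × Bool)) : ℝ :=
  sSup {c : ℝ | ∃ (A : Type) (u : A → Bool → ℝ) (σT : ℝ → A),
    (∀ a y, u a y ∈ Set.Icc (0 : ℝ) 1) ∧ IsBestResponse u σT ∧
    MeasurableStrategy u σT ∧ c = CFDLm μ u σT}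

/-- Interval integrability from a bound on the interval. -/
lemma iintC {f : ℝ → ℝ} (hf : Measurable f) {a b C : ℝ}
    (hbd : ∀ x ∈ Set.uIoc a b, |f x| ≤ C) : IntervalIntegrable f volume a b := by
  rw [intervalIntegrable_iff]
  refine Measure.integrableOn_of_bounded ?_ hf.aestronglyMeasurable
    ((ae_restrict_iff' measurableSet_uIoc).2 (Filter.Eventually.of_forall fun x hx => by
      simpa [Real.norm_eq_abs] using hbd x hx))
  rw [Set.uIoc]
  exact measure_Ioc_lt_top.ne

/-- The payoff of a measurable strategy, as an interval integral. -/
lemma payoff_formula {ε : ℝ} (hε : 0 < ε) (hε1 : ε < 1) {A : Type} {u : A → Bool → ℝ}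
    (hu : ∀ a y, u a y ∈ Set.Icc (0 : ℝ) 1) {σ : ℝ → A} (hσ : MeasurableStrategy u σ) :
    payoffm (D2 ε) u σ = (1 - ε)⁻¹ *
      ∫ v in ε..1, ((v - ε) * u (σ v) true + (1 - (v - ε)) * u (σ v) false) := by
  have hFeq : (fun z : ℝ × Bool => u (σ z.1) z.2)
      = fun z : ℝ × Bool => if z.2 ∈ ({true} : Set Bool) then u (σ z.1) true
          else u (σ z.1) false := by
    funext z
    rcases z with ⟨v, _ | _⟩ <;> simp
  have hF : Measurable fun z : ℝ × Bool => u (σ z.1) z.2 := by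
    rw [hFeq]
    exact Measurable.ite (measurable_snd (measurableSet_singleton true))
      ((hσ true).comp measurable_fst) ((hσ false).comp measurable_fst)
  rw [payoffm, D2_integral hε hε1 hF (fun z => (hu _ _).1) (fun z => (hu _ _).2),
    MeasureTheory.integral_Icc_eq_integral_Ioc, ← intervalIntegral.integral_of_le hε1.le]

section CFDLBound

variable {ε : ℝ} {A : Type} {u : A → Bool → ℝ} {σT : ℝ → A}

/-- Value function of the best response. -/
def Gf (u : A → Bool → ℝ) (σT : ℝ → A) : ℝ → ℝ :=
  fun v => v * u (σT v) true + (1 - v) * u (σT v) false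

/-- Slope (subgradient) of the value function. -/
def sf (u : A → Bool → ℝ) (σT : ℝ → A) : ℝ → ℝ :=
  fun v => u (σT v) true - u (σT v) false

lemma Gf_meas (hmT : MeasurableStrategy u σT) : Measurable (Gf u σT) :=
  (measurable_id.mul (hmT true)).add ((measurable_const.sub measurable_id).mul (hmT false))

lemma sf_meas (hmT : MeasurableStrategy u σT) : Measurable (sf u σT) :=
  (hmT true).sub (hmT false)

lemma sf_abs (hu : ∀ a y, u a y ∈ Set.Icc (0 : ℝ) 1) (v : ℝ) : |sf u σT v| ≤ 1 := by
  have h1 := hu (σT v) true; have h2 := hu (σT v) false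
  rw [sf, abs_le]
  constructor <;> [linarith [h1.1, h2.2]; linarith [h1.2, h2.1]]

lemma Gf_mem (hu : ∀ a y, u a y ∈ Set.Icc (0 : ℝ) 1) {v : ℝ} (hv : v ∈ Set.Icc (0:ℝ) 1) :
    Gf u σT v ∈ Set.Icc (0:ℝ) 1 := by
  have h1 := hu (σT v) true; have h2 := hu (σT v) false
  constructor
  · exact add_nonneg (mul_nonneg hv.1 h1.1) (mul_nonneg (by linarith [hv.2]) h2.1)
  · rw [Gf]
    nlinarith [hv.1, hv.2, h1.1, h1.2, h2.1, h2.2]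

lemma Gf_subgrad (hbr : IsBestResponse u σT) {v w : ℝ}
    (hv : v ∈ Set.Icc (0:ℝ) 1) (hw : w ∈ Set.Icc (0:ℝ) 1) :
    Gf u σT v + sf u σT v * (w - v) ≤ Gf u σT w := by
  have h := hbr w hw (σT v)
  have : w * u (σT v) true + (1 - w) * u (σT v) false
      = Gf u σT v + sf u σT v * (w - v) := by rw [Gf, sf]; ring
  rw [← this]
  exact h

lemma Gf_intable (hu : ∀ a y, u a y ∈ Set.Icc (0 : ℝ) 1) (hmT : MeasurableStrategy u σT)
    {a b : ℝ} (ha : a ∈ Set.Icc (0:ℝ) 1) (hb : b ∈ Set.Icc (0:ℝ) 1) :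
    IntervalIntegrable (Gf u σT) volume a b := by
  refine iintC (Gf_meas hmT) (C := 1) fun x hx => ?_
  have hx' : x ∈ Set.Icc (0:ℝ) 1 := by
    rcases Set.uIoc_subset_uIcc hx with h
    have := Set.uIcc_subset_Icc ha hb h
    exact this
  have := Gf_mem hu (σT := σT) hx'
  rw [abs_le]; exact ⟨by linarith [this.1], this.2⟩

lemma sf_intable (hu : ∀ a y, u a y ∈ Set.Icc (0 : ℝ) 1) (hmT : MeasurableStrategy u σT)
    (a b : ℝ) : IntervalIntegrable (sf u σT) volume a b :=
  iintC (sf_meas hmT) (C := 1) fun x _ => sf_abs hu x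

/-- Key analytic step: the integral of the subgradient is at most the increment. -/
lemma sf_integral_le (hu : ∀ a y, u a y ∈ Set.Icc (0 : ℝ) 1) (hbr : IsBestResponse u σT)
    (hmT : MeasurableStrategy u σT) (hε : 0 < ε) (hε1 : ε < 1) :
    ∫ v in ε..1, sf u σT v ≤ Gf u σT 1 - Gf u σT ε := by
  set G := Gf u σT; set s := sf u σT
  have key : ∀ h : ℝ, 0 < h → h < 1 - ε →
      ∫ v in ε..1, s v ≤ G 1 - G ε + 3 * h := by
    intro h hh0 hh1
    have hε1h : ε ≤ 1 - h := by linarith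
    have hmem : ∀ {x : ℝ}, ε ≤ x → x ≤ 1 → x ∈ Set.Icc (0:ℝ) 1 :=
      fun hx1 hx2 => ⟨by linarith, hx2⟩
    -- split
    have hi1 : IntervalIntegrable s volume ε (1 - h) := sf_intable hu hmT _ _
    have hi2 : IntervalIntegrable s volume (1 - h) 1 := sf_intable hu hmT _ _
    have hsplit := intervalIntegral.integral_add_adjacent_intervals hi1 hi2
    -- tail bound
    have htail : ∫ v in (1-h)..1, s v ≤ h := by
      have := intervalIntegral.norm_integral_le_of_norm_le_const (C := 1)
        (f := s) (a := 1-h) (b := 1) (fun x _ => by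
          simpa [Real.norm_eq_abs] using sf_abs hu x)
      rw [Real.norm_eq_abs] at this
      have h2 : |(1 : ℝ) - (1 - h)| = h := by rw [abs_of_nonneg (by linarith)]; ring
      calc ∫ v in (1-h)..1, s v ≤ |∫ v in (1-h)..1, s v| := le_abs_self _
        _ ≤ 1 * |1 - (1-h)| := this
        _ = h := by rw [one_mul, h2]
    -- main bound
    have hGh_meas : Measurable fun v : ℝ => G (v + h) :=
      (Gf_meas hmT).comp (measurable_id.add_const h)
    have hGint : ∀ {a b : ℝ}, a ∈ Set.Icc (0:ℝ) 1 → b ∈ Set.Icc (0:ℝ) 1 →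
        IntervalIntegrable G volume a b := fun ha hb => Gf_intable hu hmT ha hb
    have hrhs_int : IntervalIntegrable (fun v => (G (v + h) - G v) / h) volume ε (1-h) := by
      refine iintC ((hGh_meas.sub (Gf_meas hmT)).div_const h) (C := 2 / h) fun x hx => ?_
      have hx' : x ∈ Set.Icc ε (1-h) := by
        refine Set.uIcc_subset_Icc ⟨le_refl ε, hε1h⟩ ⟨hε1h, le_refl _⟩ ?_
        exact Set.uIoc_subset_uIcc hx
      have hm1 := Gf_mem hu (σT := σT) (hmem (by linarith [hx'.1]) (by linarith [hx'.2]) : x ∈ _)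
      have hm2 := Gf_mem hu (σT := σT) (⟨by linarith [hx'.1], by linarith [hx'.2]⟩ : x + h ∈ Set.Icc (0:ℝ) 1)
      rw [abs_div, abs_of_pos hh0]
      gcongr
      rw [abs_le]
      constructor <;> [skip; skip] <;> simp only [G, Pi.sub_apply] at hm1 hm2 ⊢ <;>
        first
          | linarith [hm1.1, hm1.2, hm2.1, hm2.2]
          | linarith [hm1.1, hm1.2, hm2.1, hm2.2]
    have hGh_int : IntervalIntegrable (fun v => G (v + h)) volume ε (1-h) := by
      refine iintC hGh_meas (C := 1) fun x hx => ?_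
      have hx' : x ∈ Set.Icc ε (1-h) :=
        Set.uIcc_subset_Icc ⟨le_refl ε, hε1h⟩ ⟨hε1h, le_refl _⟩ (Set.uIoc_subset_uIcc hx)
      have hm2 := Gf_mem hu (σT := σT)
        (⟨by linarith [hx'.1, hε.le], by linarith [hx'.2]⟩ : x + h ∈ Set.Icc (0:ℝ) 1)
      rw [abs_le]; exact ⟨by linarith [hm2.1], hm2.2⟩
    have hmono : ∫ v in ε..(1-h), s v ≤ ∫ v in ε..(1-h), (G (v+h) - G v)/h := by
      refine intervalIntegral.integral_mono_on hε1h hi1 hrhs_int fun x hx => ?_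
      have hx0 : x ∈ Set.Icc (0:ℝ) 1 := hmem hx.1 (by linarith [hx.2])
      have hxh : x + h ∈ Set.Icc (0:ℝ) 1 := ⟨by linarith [hx.1, hε.le], by linarith [hx.2]⟩
      have hsg := Gf_subgrad hbr hx0 hxh
      rw [le_div_iff₀ hh0]
      have h2 : x + h - x = h := by ring
      rw [h2] at hsg
      simp only [G, s] at hsg ⊢
      linarith
    have hshift : ∫ v in ε..(1-h), G (v+h) = ∫ v in (ε+h)..1, G v := by
      have := intervalIntegral.integral_comp_add_right (f := G) (a := ε) (b := 1-h) h
      rw [this]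
      norm_num
    have hdivint : ∫ v in ε..(1-h), (G (v+h) - G v)/h
        = ((∫ v in (ε+h)..1, G v) - ∫ v in ε..(1-h), G v) / h := by
      rw [intervalIntegral.integral_div, intervalIntegral.integral_sub hGh_int
        (hGint (hmem (le_refl _) hε1.le) (hmem (x := 1 - h) hε1h (by linarith))), hshift]
    have hA := intervalIntegral.integral_add_adjacent_intervals
      (hGint (hmem (le_refl _) hε1.le) (hmem (x := ε + h) (by linarith) (by linarith)))
      (hGint (hmem (x := ε + h) (by linarith) (by linarith)) (hmem (x := 1) hε1.le le_rfl))
    have hB := intervalIntegral.integral_add_adjacent_intervals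
      (hGint (hmem (le_refl _) hε1.le) (hmem (x := 1 - h) hε1h (by linarith)))
      (hGint (hmem (x := 1 - h) hε1h (by linarith)) (hmem (x := 1) hε1.le le_rfl))
    -- hA : ∫ ε..(ε+h) + ∫ (ε+h)..1 = ∫ ε..1 ; hB : ∫ ε..(1-h) + ∫ (1-h)..1 = ∫ ε..1
    have hs8 : ∫ v in (1-h)..1, G v ≤ h * (G 1 + h) := by
      have hmon := intervalIntegral.integral_mono_on (by linarith : (1:ℝ)-h ≤ 1)
        (hGint (hmem (x := 1 - h) hε1h (by linarith)) (hmem (x := 1) hε1.le le_rfl))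
        (intervalIntegrable_const (c := G 1 + h)) (fun x hx => ?_)
      · rw [intervalIntegral.integral_const, smul_eq_mul] at hmon
        calc ∫ v in (1-h)..1, G v ≤ (1 - (1-h)) * (G 1 + h) := hmon
          _ = h * (G 1 + h) := by ring_nf
      · have hx0 : x ∈ Set.Icc (0:ℝ) 1 := ⟨by linarith [hx.1], hx.2⟩
        have hsg := Gf_subgrad hbr hx0 (⟨zero_le_one, le_refl 1⟩ : (1:ℝ) ∈ Set.Icc (0:ℝ) 1)
        have habs := abs_le.1 (sf_abs hu (σT := σT) x)
        simp only [G, s] at hsg ⊢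
        nlinarith [hx.1, hx.2, habs.1, habs.2]
    have hs9 : h * (G ε - h) ≤ ∫ v in ε..(ε+h), G v := by
      have hmon := intervalIntegral.integral_mono_on (by linarith : ε ≤ ε+h)
        (intervalIntegrable_const (c := G ε - h))
        (hGint (hmem (le_refl _) hε1.le) (hmem (x := ε + h) (by linarith) (by linarith))) (fun x hx => ?_)
      · rw [intervalIntegral.integral_const, smul_eq_mul] at hmon
        calc h * (G ε - h) = (ε + h - ε) * (G ε - h) := by ring_nf
          _ ≤ ∫ v in ε..(ε+h), G v := hmon
      · have hx0 : x ∈ Set.Icc (0:ℝ) 1 := ⟨by linarith [hx.1, hε.le], by linarith [hx.2]⟩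
        have hsg := Gf_subgrad hbr (hmem (le_refl ε) hε1.le) hx0
        have habs := abs_le.1 (sf_abs hu (σT := σT) ε)
        simp only [G, s] at hsg ⊢
        nlinarith [hx.1, hx.2, habs.1, habs.2]
    have hfinal : ((∫ v in (ε+h)..1, G v) - ∫ v in ε..(1-h), G v) / h ≤ G 1 - G ε + 2 * h := by
      rw [div_le_iff₀ hh0]
      nlinarith [hs8, hs9, hA, hB]
    calc ∫ v in ε..1, s v = (∫ v in ε..(1-h), s v) + ∫ v in (1-h)..1, s v := hsplit.symm
      _ ≤ ((∫ v in (ε+h)..1, G v) - ∫ v in ε..(1-h), G v) / h + h := by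
          refine add_le_add (hmono.trans (le_of_eq hdivint)) htail
      _ ≤ G 1 - G ε + 2 * h + h := by linarith [hfinal]
      _ = G 1 - G ε + 3 * h := by ring
  by_contra hcon
  push_neg at hcon
  set gap := (∫ v in ε..1, s v) - (G 1 - G ε) with hgap
  have hgap0 : 0 < gap := by simp only [gap]; linarith
  set h := min (gap / 4) ((1 - ε)/2) with hh
  have hh0 : 0 < h := lt_min (by linarith) (by linarith)
  have hh1 : h < 1 - ε := (min_le_right _ _).trans_lt (by linarith)
  have := key h hh0 hh1
  have h4 : h ≤ gap / 4 := min_le_left _ _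
  simp only [gap] at h4
  linarith

lemma chord_bound (hu : ∀ a y, u a y ∈ Set.Icc (0 : ℝ) 1) (hbr : IsBestResponse u σT)
    (hmT : MeasurableStrategy u σT) (hε : 0 < ε) (hε1 : ε < 1) :
    ∫ v in (0:ℝ)..ε, Gf u σT v ≤ ε * Gf u σT ε + ε^2/2 := by
  have h01 : (0:ℝ) ∈ Set.Icc (0:ℝ) 1 := ⟨le_rfl, zero_le_one⟩
  have hεm : ε ∈ Set.Icc (0:ℝ) 1 := ⟨hε.le, hε1.le⟩
  have hpt : ∀ x ∈ Set.Icc (0:ℝ) ε, Gf u σT x ≤ Gf u σT ε + ε - x := by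
    intro x hx
    have hx01 : x ∈ Set.Icc (0:ℝ) 1 := ⟨hx.1, hx.2.trans hε1.le⟩
    have h0 := Gf_subgrad hbr hx01 h01
    have h1 := Gf_subgrad hbr hx01 hεm
    have hL := Gf_subgrad hbr h01 hεm
    have habs := abs_le.1 (sf_abs hu (σT := σT) 0)
    have hL' : Gf u σT 0 ≤ Gf u σT ε + ε := by nlinarith [habs.1]
    have e0 := mul_le_mul_of_nonneg_left h0 (sub_nonneg.2 hx.2)
    have e1 := mul_le_mul_of_nonneg_left h1 hx.1
    have e2 := mul_le_mul_of_nonneg_left hL' (sub_nonneg.2 hx.2)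
    nlinarith [e0, e1, e2, hε]
  have hint : IntervalIntegrable (fun v => Gf u σT ε + ε - v) volume 0 ε :=
    (intervalIntegrable_const).sub intervalIntegral.intervalIntegrable_id
  have hmon := intervalIntegral.integral_mono_on hε.le
    (Gf_intable hu hmT h01 hεm) hint hpt
  calc ∫ v in (0:ℝ)..ε, Gf u σT v ≤ ∫ v in (0:ℝ)..ε, (Gf u σT ε + ε - v) := hmon
    _ = ε * Gf u σT ε + ε^2/2 := by
        rw [intervalIntegral.integral_sub intervalIntegrable_const
          intervalIntegral.intervalIntegrable_id,
          intervalIntegral.integral_const, integral_id, smul_eq_mul]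
        ring

lemma tail_bound (hu : ∀ a y, u a y ∈ Set.Icc (0 : ℝ) 1) (hbr : IsBestResponse u σT)
    (hmT : MeasurableStrategy u σT) (hε : 0 < ε) (hε1 : ε < 1) :
    ε * Gf u σT 1 - ε^2/2 ≤ ∫ v in (1-ε)..1, Gf u σT v := by
  have h11 : (1:ℝ) ∈ Set.Icc (0:ℝ) 1 := ⟨zero_le_one, le_rfl⟩
  have h1ε : (1-ε) ∈ Set.Icc (0:ℝ) 1 := ⟨by linarith, by linarith⟩
  have hpt : ∀ x ∈ Set.Icc (1-ε) 1, Gf u σT 1 - (1 - x) ≤ Gf u σT x := by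
    intro x hx
    have hx01 : x ∈ Set.Icc (0:ℝ) 1 := ⟨by linarith [hx.1], hx.2⟩
    have h0 := Gf_subgrad hbr h11 hx01
    have habs := abs_le.1 (sf_abs hu (σT := σT) 1)
    nlinarith [hx.2]
  have hint : IntervalIntegrable (fun v => Gf u σT 1 - (1 - v)) volume (1-ε) 1 :=
    (intervalIntegrable_const).sub
      ((intervalIntegrable_const).sub intervalIntegral.intervalIntegrable_id)
  have hmon := intervalIntegral.integral_mono_on (by linarith : (1:ℝ)-ε ≤ 1)
    hint (Gf_intable hu hmT h1ε h11) hpt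
  calc ε * Gf u σT 1 - ε^2/2
      = ∫ v in (1-ε)..1, (Gf u σT 1 - (1 - v)) := by
        rw [intervalIntegral.integral_sub intervalIntegrable_const
          ((intervalIntegrable_const).sub intervalIntegral.intervalIntegrable_id),
          intervalIntegral.integral_sub intervalIntegrable_const
          intervalIntegral.intervalIntegrable_id,
          intervalIntegral.integral_const, intervalIntegral.integral_const,
          integral_id, smul_eq_mul, smul_eq_mul]
        ring
    _ ≤ ∫ v in (1-ε)..1, Gf u σT v := hmon

end CFDLBound

lemma CFDL_le {ε : ℝ} {A : Type} {u : A → Bool → ℝ} {σT : ℝ → A}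
    (hε : 0 < ε) (hε1 : ε < 1) (hu : ∀ a y, u a y ∈ Set.Icc (0 : ℝ) 1)
    (hbr : IsBestResponse u σT) (hmT : MeasurableStrategy u σT) :
    CFDLm (D2 ε) u σT ≤ ε ^ 2 / (1 - ε) := by
  have h1ε : (0:ℝ) < 1 - ε := by linarith
  have h01 : (0:ℝ) ∈ Set.Icc (0:ℝ) 1 := ⟨le_rfl, zero_le_one⟩
  have h11 : (1:ℝ) ∈ Set.Icc (0:ℝ) 1 := ⟨zero_le_one, le_rfl⟩
  have hεm : ε ∈ Set.Icc (0:ℝ) 1 := ⟨hε.le, hε1.le⟩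
  have h1εm : (1-ε) ∈ Set.Icc (0:ℝ) 1 := ⟨by linarith, by linarith⟩
  -- payoff of σT
  have hPT : payoffm (D2 ε) u σT
      = (1 - ε)⁻¹ * ∫ v in ε..1, (Gf u σT v - ε * sf u σT v) := by
    rw [payoff_formula hε hε1 hu hmT]
    congr 1
    refine intervalIntegral.integral_congr fun x _ => ?_
    simp only [Gf, sf]; ring
  -- upper bound on each payoff
  have hB : ∀ e ∈ {e : ℝ | ∃ σ : ℝ → A, MeasurableStrategy u σ ∧ e = payoffm (D2 ε) u σ},
      e ≤ (1 - ε)⁻¹ * ∫ v in (0:ℝ)..(1-ε), Gf u σT v := by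
    rintro e ⟨σ, hσ, rfl⟩
    rw [payoff_formula hε hε1 hu hσ]
    refine mul_le_mul_of_nonneg_left ?_ (inv_nonneg.2 (by linarith))
    have hshift : ∫ v in ε..1, Gf u σT (v - ε) = ∫ v in (0:ℝ)..(1-ε), Gf u σT v := by
      rw [intervalIntegral.integral_comp_sub_right (f := Gf u σT) ε, sub_self]
    rw [← hshift]
    have hlhs_int : IntervalIntegrable
        (fun v => (v - ε) * u (σ v) true + (1 - (v - ε)) * u (σ v) false) volume ε 1 := by
      refine iintC (((measurable_id.sub measurable_const).mul (hσ true)).add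
        ((measurable_const.sub (measurable_id.sub measurable_const)).mul (hσ false)))
        (C := 1) fun x hx => ?_
      have hx' : x ∈ Set.Icc ε 1 :=
        Set.uIcc_subset_Icc ⟨le_rfl, hε1.le⟩ ⟨hε1.le, le_rfl⟩ (Set.uIoc_subset_uIcc hx)
      have h1 := hu (σ x) true; have h2 := hu (σ x) false
      simp only [Pi.add_apply, Pi.mul_apply, Pi.sub_apply, id_eq]
      rw [abs_le]
      constructor <;> nlinarith [hx'.1, hx'.2, h1.1, h1.2, h2.1, h2.2]
    have hrhs_int : IntervalIntegrable (fun v => Gf u σT (v - ε)) volume ε 1 := by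
      refine iintC ((Gf_meas hmT).comp (measurable_id.sub measurable_const)) (C := 1)
        fun x hx => ?_
      have hx' : x ∈ Set.Icc ε 1 :=
        Set.uIcc_subset_Icc ⟨le_rfl, hε1.le⟩ ⟨hε1.le, le_rfl⟩ (Set.uIoc_subset_uIcc hx)
      have hm := Gf_mem hu (σT := σT)
        (⟨by linarith [hx'.1], by linarith [hx'.2]⟩ : x - ε ∈ Set.Icc (0:ℝ) 1)
      simp only [Function.comp_apply, Pi.sub_apply, id_eq]
      rw [abs_le]; exact ⟨by linarith [hm.1], hm.2⟩
    refine intervalIntegral.integral_mono_on hε1.le hlhs_int hrhs_int fun x hx => ?_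
    have hxε : x - ε ∈ Set.Icc (0:ℝ) 1 := ⟨by linarith [hx.1], by linarith [hx.2]⟩
    have := hbr (x - ε) hxε (σ x)
    simpa [Gf] using this
  have hsup : sSup {e : ℝ | ∃ σ : ℝ → A, MeasurableStrategy u σ ∧ e = payoffm (D2 ε) u σ}
      ≤ (1 - ε)⁻¹ * ∫ v in (0:ℝ)..(1-ε), Gf u σT v := by
    refine Real.sSup_le hB (mul_nonneg (inv_nonneg.2 (by linarith)) ?_)
    refine intervalIntegral.integral_nonneg (by linarith) fun x hx => ?_
    exact (Gf_mem hu (σT := σT) ⟨hx.1, by linarith [hx.2]⟩).1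
  -- interval splits
  have hX := intervalIntegral.integral_add_adjacent_intervals
    (Gf_intable hu hmT h01 hεm) (Gf_intable hu hmT hεm h1εm)
  have hY := intervalIntegral.integral_add_adjacent_intervals
    (Gf_intable hu hmT hεm h1εm) (Gf_intable hu hmT h1εm h11)
  have hC := chord_bound hu hbr hmT hε hε1
  have hT := tail_bound hu hbr hmT hε hε1
  have hS := sf_integral_le hu hbr hmT hε hε1
  have hGL : Gf u σT ε + sf u σT ε * (1 - ε) ≤ Gf u σT 1 := Gf_subgrad hbr hεm h11
  have hkey : (∫ v in (0:ℝ)..(1-ε), Gf u σT v)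
      - (∫ v in ε..1, (Gf u σT v - ε * sf u σT v)) ≤ ε^2 := by
    rw [intervalIntegral.integral_sub (Gf_intable hu hmT hεm h11)
      ((sf_intable hu hmT ε 1).const_mul ε), intervalIntegral.integral_const_mul]
    nlinarith [hX, hY, hC, hT, hS]
  calc CFDLm (D2 ε) u σT
      ≤ (1 - ε)⁻¹ * (∫ v in (0:ℝ)..(1-ε), Gf u σT v)
        - (1 - ε)⁻¹ * ∫ v in ε..1, (Gf u σT v - ε * sf u σT v) := by
        rw [CFDLm, ← hPT]
        exact sub_le_sub_right hsup _
    _ = (1 - ε)⁻¹ * ((∫ v in (0:ℝ)..(1-ε), Gf u σT v)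
        - ∫ v in ε..1, (Gf u σT v - ε * sf u σT v)) := by ring
    _ ≤ (1 - ε)⁻¹ * ε^2 := mul_le_mul_of_nonneg_left hkey (inv_nonneg.2 (by linarith))
    _ = ε ^ 2 / (1 - ε) := by rw [div_eq_mul_inv, mul_comm]

/-- for `ε ∈ (0, 1/10)`, with `x` uniform on `[ε,1]`, `y` Bernoulli
(`x - ε`) given `x`, and the identity predictor, `ECE = ε` while
`CDL ≤ ε²/(1 - ε)`: the CDL can be quadratically smaller than the ECE. -/
theorem cdl_quadratically_smaller_than_ece
    (ε : ℝ) (hε : ε ∈ Set.Ioo (0 : ℝ) (1 / 10)) :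
    ECEm (D2 ε) = ε ∧ CDLm (D2 ε) ≤ ε ^ 2 / (1 - ε) := by
  obtain ⟨hε0, hε10⟩ := hε
  have hε1 : ε < 1 := by linarith
  refine ⟨ECE_eq hε0 hε1, ?_⟩
  refine Real.sSup_le ?_ (div_nonneg (sq_nonneg ε) (by linarith))
  rintro c ⟨A, u, σT, hu, hbr, hmT, rfl⟩
  exact CFDL_le hε0 hε1 hu hbr hmT
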